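/- Let π and π̃ be probability measures on ℝ^d and P a transition kernel on ℝ^d such that, with ν(dx dy) := P(x, dy) π(dx), ν̃(dx dy) := P(x, dy) π̃(dx) and their swaps ν^⊤, ν̃^⊤, the minima ν ∧ ν^⊤ and ν̃ ∧ ν̃^⊤ are well-defined (i.e., ν^⊤ ≪ ν and ν̃^⊤ ≪ ν̃). Then d_TV(ν ∧ ν^⊤, ν̃ ∧ ν̃^⊤) ≤ 2 d_TV(π, π̃) and d_H(ν ∧ ν^⊤, ν̃ ∧ ν̃^⊤) ≤ 2 d_H(π, π̃). -/

import Mathlib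

open MeasureTheory ProbabilityTheory
open scoped ENNReal NNReal

/-- The total variation distance `d_TV(μ, ν) = ½ ∫ |dμ/dη − dν/dη| dη` computed w.r.t. the
dominating measure `η = μ + ν`. -/
noncomputable def tvDist {α : Type*} [MeasurableSpace α] (μ ν : Measure α) : ℝ :=
  (1 / 2) * ∫ x, |(μ.rnDeriv (μ + ν) x).toReal - (ν.rnDeriv (μ + ν) x).toReal| ∂(μ + ν)

/-- The Hellinger distance `d_H(μ, ν) = (∫ |√(dμ/dη) − √(dν/dη)|² dη)^{1/2}` computed w.r.t.
the dominating measure `η = μ + ν`. -/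
noncomputable def hellingerDist {α : Type*} [MeasurableSpace α] (μ ν : Measure α) : ℝ :=
  Real.sqrt (∫ x, (Real.sqrt (μ.rnDeriv (μ + ν) x).toReal
    - Real.sqrt (ν.rnDeriv (μ + ν) x).toReal) ^ 2 ∂(μ + ν))

section Aux

variable {α β : Type*} {mα : MeasurableSpace α} {mβ : MeasurableSpace β}

lemma aux_abs_min_sub_min (x y z w : ℝ) : |min x y - min z w| ≤ |x - z| + |y - w| := by
  have h1 := le_abs_self (x - z); have h2 := neg_abs_le (x - z)
  have h3 := le_abs_self (y - w); have h4 := neg_abs_le (y - w)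
  simp only [min_def]
  split_ifs <;> rw [abs_le] <;> constructor <;> linarith

lemma aux_sq_sqrt_min_sub (x y z w : ℝ) :
    (Real.sqrt (min x y) - Real.sqrt (min z w)) ^ 2
      ≤ (Real.sqrt x - Real.sqrt z) ^ 2 + (Real.sqrt y - Real.sqrt w) ^ 2 := by
  have hmono : Monotone Real.sqrt := fun _ _ h => Real.sqrt_le_sqrt h
  rw [hmono.map_min, hmono.map_min]
  set p := Real.sqrt x; set q := Real.sqrt y; set r := Real.sqrt z; set s := Real.sqrt w
  have h1 := le_abs_self (p - r); have h2 := neg_abs_le (p - r)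
  have h3 := le_abs_self (q - s); have h4 := neg_abs_le (q - s)
  have ha := le_max_left |p - r| |q - s|; have hb := le_max_right |p - r| |q - s|
  have habs : |min p q - min r s| ≤ max |p - r| |q - s| := by
    rw [abs_le]
    rcases min_cases p q with ⟨e1, hm1⟩ | ⟨e1, hm1⟩ <;>
      rcases min_cases r s with ⟨e2, hm2⟩ | ⟨e2, hm2⟩ <;>
      rw [e1, e2] <;> constructor <;> linarith
  calc (min p q - min r s) ^ 2 = |min p q - min r s| ^ 2 := by rw [sq_abs]
    _ ≤ (max |p - r| |q - s|) ^ 2 := pow_le_pow_left₀ (abs_nonneg _) habs 2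
    _ ≤ |p - r| ^ 2 + |q - s| ^ 2 := by
        rcases max_cases |p - r| |q - s| with ⟨h, _⟩ | ⟨h, _⟩ <;> rw [h]
        · exact le_add_of_nonneg_right (sq_nonneg _)
        · exact le_add_of_nonneg_left (sq_nonneg _)
    _ = (p - r) ^ 2 + (q - s) ^ 2 := by rw [sq_abs, sq_abs]

lemma aux_withDensity_inf (η : Measure α) {f g : α → ℝ≥0∞} (hf : Measurable f)
    (hg : Measurable g) :
    (η.withDensity f) ⊓ (η.withDensity g) = η.withDensity (fun x => min (f x) (g x)) := by
  refine le_antisymm ?_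
    (le_inf (withDensity_mono (Filter.Eventually.of_forall fun x => min_le_left _ _))
      (withDensity_mono (Filter.Eventually.of_forall fun x => min_le_right _ _)))
  refine Measure.le_iff.mpr fun s hs => ?_
  rw [Measure.inf_apply hs]
  set t : Set α := {x | f x ≤ g x} with ht_def
  have ht : MeasurableSet t := measurableSet_le hf hg
  refine le_trans (sInf_le ⟨t, rfl⟩) (le_of_eq ?_)
  rw [withDensity_apply _ hs, withDensity_apply _ (ht.inter hs),
    withDensity_apply _ (ht.compl.inter hs)]
  have h1 : ∫⁻ x in t ∩ s, f x ∂η = ∫⁻ x in t ∩ s, min (f x) (g x) ∂η := by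
    refine setLIntegral_congr_fun (ht.inter hs) (fun x hx => ?_)
    exact (min_eq_left hx.1).symm
  have h2 : ∫⁻ x in tᶜ ∩ s, g x ∂η = ∫⁻ x in tᶜ ∩ s, min (f x) (g x) ∂η := by
    refine setLIntegral_congr_fun (ht.compl.inter hs) (fun x hx => ?_)
    exact (min_eq_right (le_of_not_ge (by simpa [ht_def] using hx.1))).symm
  rw [h1, h2, ← lintegral_union (ht.compl.inter hs) ?_, ← Set.union_inter_distrib_right,
    Set.union_compl_self, Set.univ_inter]
  exact Disjoint.mono inf_le_left inf_le_left disjoint_compl_right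

lemma aux_integral_rnDeriv_phi (μ ν η : Measure α) [IsFiniteMeasure μ] [IsFiniteMeasure ν]
    [SigmaFinite η] (hμ : μ ≪ η) (hν : ν ≪ η) (φ : ℝ → ℝ → ℝ)
    (hφ : ∀ w a b : ℝ, 0 ≤ w → φ (w * a) (w * b) = w * φ a b) :
    ∫ x, φ (μ.rnDeriv (μ + ν) x).toReal (ν.rnDeriv (μ + ν) x).toReal ∂(μ + ν)
      = ∫ x, φ (μ.rnDeriv η x).toReal (ν.rnDeriv η x).toReal ∂η := by
  have hζ : μ + ν ≪ η := Measure.AbsolutelyContinuous.add_left_iff.mpr ⟨hμ, hν⟩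
  rw [← MeasureTheory.integral_rnDeriv_smul (μ := μ + ν) (ν := η) hζ
    (f := fun x => φ (μ.rnDeriv (μ + ν) x).toReal (ν.rnDeriv (μ + ν) x).toReal)]
  refine integral_congr_ae ?_
  have h1 := Measure.rnDeriv_mul_rnDeriv (μ := μ) (ν := μ + ν) (κ := η)
    (Measure.absolutelyContinuous_of_le (Measure.le_add_right le_rfl))
  have h2 := Measure.rnDeriv_mul_rnDeriv (μ := ν) (ν := μ + ν) (κ := η)
    (Measure.absolutelyContinuous_of_le (Measure.le_add_left le_rfl))
  filter_upwards [h1, h2] with x h1x h2x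
  rw [smul_eq_mul, ← hφ _ _ _ ENNReal.toReal_nonneg, ← h1x, ← h2x, Pi.mul_apply, Pi.mul_apply,
    ENNReal.toReal_mul, ENNReal.toReal_mul, mul_comm ((μ + ν).rnDeriv η x).toReal,
    mul_comm ((μ + ν).rnDeriv η x).toReal]

lemma aux_integral_phi_map {f : α → β} (hf : MeasurableEmbedding f) (μ ν : Measure α)
    [IsFiniteMeasure μ] [IsFiniteMeasure ν]
    (φ : ℝ → ℝ → ℝ) (hφc : Continuous fun p : ℝ × ℝ => φ p.1 p.2) :
    ∫ y, φ ((μ.map f).rnDeriv (μ.map f + ν.map f) y).toReal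
        ((ν.map f).rnDeriv (μ.map f + ν.map f) y).toReal ∂(μ.map f + ν.map f)
      = ∫ x, φ (μ.rnDeriv (μ + ν) x).toReal (ν.rnDeriv (μ + ν) x).toReal ∂(μ + ν) := by
  have hadd : μ.map f + ν.map f = (μ + ν).map f := (Measure.map_add _ _ hf.measurable).symm
  rw [hadd]
  have hmeas : Measurable fun y => φ ((μ.map f).rnDeriv ((μ + ν).map f) y).toReal
      ((ν.map f).rnDeriv ((μ + ν).map f) y).toReal :=
    hφc.measurable.comp ((Measure.measurable_rnDeriv _ _).ennreal_toReal.prodMk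
      (Measure.measurable_rnDeriv _ _).ennreal_toReal)
  rw [integral_map hf.measurable.aemeasurable hmeas.aestronglyMeasurable]
  refine integral_congr_ae ?_
  filter_upwards [hf.rnDeriv_map μ (μ + ν), hf.rnDeriv_map ν (μ + ν)] with x h1 h2
  rw [h1, h2]

lemma aux_compProd_eq_withDensity (μ ρ : Measure α) [IsFiniteMeasure μ] [IsFiniteMeasure ρ]
    (hμρ : μ ≪ ρ) (P : Kernel α β) [IsSFiniteKernel P] :
    μ ⊗ₘ P = (ρ ⊗ₘ P).withDensity (fun p => μ.rnDeriv ρ p.1) := by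
  ext s hs
  rw [Measure.compProd_apply hs, withDensity_apply _ hs,
    ← MeasureTheory.lintegral_rnDeriv_mul hμρ
      (Kernel.measurable_kernel_prodMk_left hs).aemeasurable,
    ← lintegral_indicator hs]
  have hm : Measurable (s.indicator fun p : α × β => μ.rnDeriv ρ p.1) :=
    (((Measure.measurable_rnDeriv μ ρ).comp measurable_fst).indicator hs)
  rw [Measure.lintegral_compProd hm]
  refine lintegral_congr fun x => ?_
  have : ∀ y : β, s.indicator (fun p : α × β => μ.rnDeriv ρ p.1) (x, y)
      = (Prod.mk x ⁻¹' s).indicator (fun _ => μ.rnDeriv ρ x) y := by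
    intro y; simp only [Set.indicator, Set.mem_preimage]; rfl
  simp_rw [this]
  rw [lintegral_indicator (measurable_prodMk_left hs), setLIntegral_const]

lemma aux_rnDeriv_compProd (μ ρ : Measure α) [IsFiniteMeasure μ] [IsFiniteMeasure ρ]
    (hμρ : μ ≪ ρ) (P : Kernel α β) [IsSFiniteKernel P] [SigmaFinite (ρ ⊗ₘ P)] :
    (μ ⊗ₘ P).rnDeriv (ρ ⊗ₘ P) =ᵐ[ρ ⊗ₘ P] fun p => μ.rnDeriv ρ p.1 := by
  rw [aux_compProd_eq_withDensity μ ρ hμρ P]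
  exact Measure.rnDeriv_withDensity _ ((Measure.measurable_rnDeriv μ ρ).comp measurable_fst)

lemma aux_integral_phi_compProd (π πt : Measure α) [IsProbabilityMeasure π]
    [IsProbabilityMeasure πt] (P : Kernel α β) [IsMarkovKernel P] (φ : ℝ → ℝ → ℝ)
    (hφc : Continuous fun p : ℝ × ℝ => φ p.1 p.2) :
    ∫ p, φ ((π ⊗ₘ P).rnDeriv (π ⊗ₘ P + πt ⊗ₘ P) p).toReal
        ((πt ⊗ₘ P).rnDeriv (π ⊗ₘ P + πt ⊗ₘ P) p).toReal ∂(π ⊗ₘ P + πt ⊗ₘ P)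
      = ∫ x, φ (π.rnDeriv (π + πt) x).toReal (πt.rnDeriv (π + πt) x).toReal ∂(π + πt) := by
  have hadd : π ⊗ₘ P + πt ⊗ₘ P = (π + πt) ⊗ₘ P := (Measure.compProd_add_left π πt P).symm
  rw [hadd]
  have h1 := aux_rnDeriv_compProd π (π + πt)
    (Measure.absolutelyContinuous_of_le (Measure.le_add_right le_rfl)) P
  have h2 := aux_rnDeriv_compProd πt (π + πt)
    (Measure.absolutelyContinuous_of_le (Measure.le_add_left le_rfl)) P
  have hψ : Measurable fun x => φ (π.rnDeriv (π + πt) x).toReal (πt.rnDeriv (π + πt) x).toReal :=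
    hφc.measurable.comp ((Measure.measurable_rnDeriv _ _).ennreal_toReal.prodMk
      (Measure.measurable_rnDeriv _ _).ennreal_toReal)
  calc ∫ p, φ (((π ⊗ₘ P).rnDeriv ((π + πt) ⊗ₘ P)) p).toReal
        (((πt ⊗ₘ P).rnDeriv ((π + πt) ⊗ₘ P)) p).toReal ∂((π + πt) ⊗ₘ P)
      = ∫ p : α × β, φ (π.rnDeriv (π + πt) p.1).toReal (πt.rnDeriv (π + πt) p.1).toReal
          ∂((π + πt) ⊗ₘ P) := by
        refine integral_congr_ae ?_
        filter_upwards [h1, h2] with p h1p h2p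
        rw [h1p, h2p]
    _ = ∫ x, φ (π.rnDeriv (π + πt) x).toReal (πt.rnDeriv (π + πt) x).toReal
          ∂(((π + πt) ⊗ₘ P).map Prod.fst) :=
        (integral_map measurable_fst.aemeasurable hψ.aestronglyMeasurable).symm
    _ = ∫ x, φ (π.rnDeriv (π + πt) x).toReal (πt.rnDeriv (π + πt) x).toReal ∂(π + πt) := by
        rw [← Measure.fst, Measure.fst_compProd]

lemma aux_key {α : Type*} [MeasurableSpace α] (π πt : Measure α)
    [IsProbabilityMeasure π] [IsProbabilityMeasure πt] (P : Kernel α α) [IsMarkovKernel P]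
    (φ : ℝ → ℝ → ℝ)
    (hφ : ∀ w a b : ℝ, 0 ≤ w → φ (w * a) (w * b) = w * φ a b)
    (hφc : Continuous fun p : ℝ × ℝ => φ p.1 p.2)
    (hφ0 : ∀ a b : ℝ, 0 ≤ φ a b)
    (hφle : ∀ a b : ℝ, 0 ≤ a → 0 ≤ b → φ a b ≤ 2 * (a + b))
    (hφmin : ∀ a b c d : ℝ, φ (min a b) (min c d) ≤ φ a c + φ b d) :
    ∫ p, φ ((((π ⊗ₘ P) ⊓ ((π ⊗ₘ P).map Prod.swap)).rnDeriv (((π ⊗ₘ P) ⊓ ((π ⊗ₘ P).map Prod.swap)) + ((πt ⊗ₘ P) ⊓ ((πt ⊗ₘ P).map Prod.swap)))) p).toReal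
        ((((πt ⊗ₘ P) ⊓ ((πt ⊗ₘ P).map Prod.swap)).rnDeriv (((π ⊗ₘ P) ⊓ ((π ⊗ₘ P).map Prod.swap)) + ((πt ⊗ₘ P) ⊓ ((πt ⊗ₘ P).map Prod.swap)))) p).toReal
        ∂(((π ⊗ₘ P) ⊓ ((π ⊗ₘ P).map Prod.swap)) + ((πt ⊗ₘ P) ⊓ ((πt ⊗ₘ P).map Prod.swap)))
      ≤ 2 * ∫ x, φ (π.rnDeriv (π + πt) x).toReal (πt.rnDeriv (π + πt) x).toReal ∂(π + πt) := by
  set ν₁ : Measure (α × α) := π ⊗ₘ P with hd1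
  set ν₂ : Measure (α × α) := πt ⊗ₘ P with hd2
  set τ₁ : Measure (α × α) := ν₁.map Prod.swap with hd3
  set τ₂ : Measure (α × α) := ν₂.map Prod.swap with hd4
  set m₁ : Measure (α × α) := ν₁ ⊓ τ₁ with hd5
  set m₂ : Measure (α × α) := ν₂ ⊓ τ₂ with hd6
  haveI : IsFiniteMeasure τ₁ := by rw [hd3]; exact Measure.isFiniteMeasure_map _ _
  haveI : IsFiniteMeasure τ₂ := by rw [hd4]; exact Measure.isFiniteMeasure_map _ _
  haveI : IsFiniteMeasure m₁ := isFiniteMeasure_of_le ν₁ inf_le_left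
  haveI : IsFiniteMeasure m₂ := isFiniteMeasure_of_le ν₂ inf_le_left
  set η : Measure (α × α) := (ν₁ + ν₂) + (τ₁ + τ₂) with hdη
  have hle1 : ν₁ ≤ η := Measure.le_add_right (Measure.le_add_right le_rfl)
  have hle2 : ν₂ ≤ η := Measure.le_add_right (Measure.le_add_left le_rfl)
  have hle3 : τ₁ ≤ η := Measure.le_add_left (Measure.le_add_right le_rfl)
  have hle4 : τ₂ ≤ η := Measure.le_add_left (Measure.le_add_left le_rfl)
  have habs1 : ν₁ ≪ η := Measure.absolutelyContinuous_of_le hle1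
  have habs2 : ν₂ ≪ η := Measure.absolutelyContinuous_of_le hle2
  have habs3 : τ₁ ≪ η := Measure.absolutelyContinuous_of_le hle3
  have habs4 : τ₂ ≪ η := Measure.absolutelyContinuous_of_le hle4
  have habsm₁ : m₁ ≪ η := Measure.absolutelyContinuous_of_le (le_trans inf_le_left hle1)
  have habsm₂ : m₂ ≪ η := Measure.absolutelyContinuous_of_le (le_trans inf_le_left hle2)
  have hm₁ : m₁ = η.withDensity (fun x => min (ν₁.rnDeriv η x) (τ₁.rnDeriv η x)) := by
    conv_lhs => rw [hd5, ← Measure.withDensity_rnDeriv_eq ν₁ η habs1,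
      ← Measure.withDensity_rnDeriv_eq τ₁ η habs3]
    exact aux_withDensity_inf η (Measure.measurable_rnDeriv _ _) (Measure.measurable_rnDeriv _ _)
  have hm₂ : m₂ = η.withDensity (fun x => min (ν₂.rnDeriv η x) (τ₂.rnDeriv η x)) := by
    conv_lhs => rw [hd6, ← Measure.withDensity_rnDeriv_eq ν₂ η habs2,
      ← Measure.withDensity_rnDeriv_eq τ₂ η habs4]
    exact aux_withDensity_inf η (Measure.measurable_rnDeriv _ _) (Measure.measurable_rnDeriv _ _)
  have hm₁d : m₁.rnDeriv η =ᵐ[η] fun x => min (ν₁.rnDeriv η x) (τ₁.rnDeriv η x) := by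
    conv_lhs => rw [hm₁]
    exact Measure.rnDeriv_withDensity η
      ((Measure.measurable_rnDeriv _ _).min (Measure.measurable_rnDeriv _ _))
  have hm₂d : m₂.rnDeriv η =ᵐ[η] fun x => min (ν₂.rnDeriv η x) (τ₂.rnDeriv η x) := by
    conv_lhs => rw [hm₂]
    exact Measure.rnDeriv_withDensity η
      ((Measure.measurable_rnDeriv _ _).min (Measure.measurable_rnDeriv _ _))
  have step1 : ∫ p, φ ((m₁.rnDeriv (m₁ + m₂)) p).toReal ((m₂.rnDeriv (m₁ + m₂)) p).toReal
        ∂(m₁ + m₂)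
      = ∫ x, φ (m₁.rnDeriv η x).toReal (m₂.rnDeriv η x).toReal ∂η :=
    aux_integral_rnDeriv_phi m₁ m₂ η habsm₁ habsm₂ φ hφ
  have step2 : ∫ x, φ (m₁.rnDeriv η x).toReal (m₂.rnDeriv η x).toReal ∂η
      = ∫ x, φ (min (ν₁.rnDeriv η x).toReal (τ₁.rnDeriv η x).toReal)
          (min (ν₂.rnDeriv η x).toReal (τ₂.rnDeriv η x).toReal) ∂η := by
    refine integral_congr_ae ?_
    filter_upwards [hm₁d, hm₂d, Measure.rnDeriv_lt_top ν₁ η, Measure.rnDeriv_lt_top τ₁ η,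
      Measure.rnDeriv_lt_top ν₂ η, Measure.rnDeriv_lt_top τ₂ η] with x h1 h2 l1 l2 l3 l4
    rw [h1, h2, ENNReal.toReal_min l1.ne l2.ne, ENNReal.toReal_min l3.ne l4.ne]
  have hint1 : Integrable (fun x => φ (ν₁.rnDeriv η x).toReal (ν₂.rnDeriv η x).toReal) η := by
    refine Integrable.mono
      (((Measure.integrable_toReal_rnDeriv (μ := ν₁) (ν := η)).add
        (Measure.integrable_toReal_rnDeriv (μ := ν₂) (ν := η))).const_mul 2)
      (hφc.measurable.comp ((Measure.measurable_rnDeriv _ _).ennreal_toReal.prodMk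
        (Measure.measurable_rnDeriv _ _).ennreal_toReal)).aestronglyMeasurable
      (Filter.Eventually.of_forall fun x => ?_)
    simp only [Pi.add_apply, Real.norm_eq_abs]
    rw [abs_of_nonneg (hφ0 _ _), abs_of_nonneg (mul_nonneg (by norm_num : (0:ℝ) ≤ 2)
      (add_nonneg ENNReal.toReal_nonneg ENNReal.toReal_nonneg))]
    exact hφle _ _ ENNReal.toReal_nonneg ENNReal.toReal_nonneg
  have hint2 : Integrable (fun x => φ (τ₁.rnDeriv η x).toReal (τ₂.rnDeriv η x).toReal) η := by
    refine Integrable.mono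
      (((Measure.integrable_toReal_rnDeriv (μ := τ₁) (ν := η)).add
        (Measure.integrable_toReal_rnDeriv (μ := τ₂) (ν := η))).const_mul 2)
      (hφc.measurable.comp ((Measure.measurable_rnDeriv _ _).ennreal_toReal.prodMk
        (Measure.measurable_rnDeriv _ _).ennreal_toReal)).aestronglyMeasurable
      (Filter.Eventually.of_forall fun x => ?_)
    simp only [Pi.add_apply, Real.norm_eq_abs]
    rw [abs_of_nonneg (hφ0 _ _), abs_of_nonneg (mul_nonneg (by norm_num : (0:ℝ) ≤ 2)
      (add_nonneg ENNReal.toReal_nonneg ENNReal.toReal_nonneg))]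
    exact hφle _ _ ENNReal.toReal_nonneg ENNReal.toReal_nonneg
  have step3 : ∫ x, φ (min (ν₁.rnDeriv η x).toReal (τ₁.rnDeriv η x).toReal)
          (min (ν₂.rnDeriv η x).toReal (τ₂.rnDeriv η x).toReal) ∂η
      ≤ ∫ x, (φ (ν₁.rnDeriv η x).toReal (ν₂.rnDeriv η x).toReal
          + φ (τ₁.rnDeriv η x).toReal (τ₂.rnDeriv η x).toReal) ∂η := by
    refine integral_mono_of_nonneg (Filter.Eventually.of_forall fun x => hφ0 _ _)
      (hint1.add hint2) (Filter.Eventually.of_forall fun x => hφmin _ _ _ _)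
  have step4 : ∫ x, (φ (ν₁.rnDeriv η x).toReal (ν₂.rnDeriv η x).toReal
        + φ (τ₁.rnDeriv η x).toReal (τ₂.rnDeriv η x).toReal) ∂η
      = (∫ x, φ (ν₁.rnDeriv η x).toReal (ν₂.rnDeriv η x).toReal ∂η)
        + ∫ x, φ (τ₁.rnDeriv η x).toReal (τ₂.rnDeriv η x).toReal ∂η :=
    integral_add hint1 hint2
  have hI1 : ∫ x, φ (ν₁.rnDeriv η x).toReal (ν₂.rnDeriv η x).toReal ∂η
      = ∫ x, φ (π.rnDeriv (π + πt) x).toReal (πt.rnDeriv (π + πt) x).toReal ∂(π + πt) := by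
    rw [← aux_integral_rnDeriv_phi ν₁ ν₂ η habs1 habs2 φ hφ]
    exact aux_integral_phi_compProd π πt P φ hφc
  have hswap : MeasurableEmbedding (Prod.swap : α × α → α × α) :=
    (MeasurableEquiv.prodComm : (α × α) ≃ᵐ (α × α)).measurableEmbedding
  have hI2 : ∫ x, φ (τ₁.rnDeriv η x).toReal (τ₂.rnDeriv η x).toReal ∂η
      = ∫ x, φ (π.rnDeriv (π + πt) x).toReal (πt.rnDeriv (π + πt) x).toReal ∂(π + πt) := by
    rw [← aux_integral_rnDeriv_phi τ₁ τ₂ η habs3 habs4 φ hφ, hd3, hd4,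
      aux_integral_phi_map hswap ν₁ ν₂ φ hφc]
    exact aux_integral_phi_compProd π πt P φ hφc
  calc ∫ p, φ ((m₁.rnDeriv (m₁ + m₂)) p).toReal ((m₂.rnDeriv (m₁ + m₂)) p).toReal ∂(m₁ + m₂)
      = ∫ x, φ (m₁.rnDeriv η x).toReal (m₂.rnDeriv η x).toReal ∂η := step1
    _ = _ := step2
    _ ≤ _ := step3
    _ = _ := step4
    _ = 2 * ∫ x, φ (π.rnDeriv (π + πt) x).toReal (πt.rnDeriv (π + πt) x).toReal ∂(π + πt) := by
        rw [hI1, hI2]; ring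

end Aux

/-- With `ν(dx dy) := P(x, dy) π(dx)`, `ν̃(dx dy) := P(x, dy) π̃(dx)`, their
swaps `ν^⊤, ν̃^⊤`, and assuming `ν^⊤ ≪ ν`, `ν̃^⊤ ≪ ν̃` (so the minimum measures `ν ⊓ ν^⊤` and
`ν̃ ⊓ ν̃^⊤` are well-defined), one has
`d_TV(ν ∧ ν^⊤, ν̃ ∧ ν̃^⊤) ≤ 2 d_TV(π, π̃)` and `d_H(ν ∧ ν^⊤, ν̃ ∧ ν̃^⊤) ≤ 2 d_H(π, π̃)`. -/
theorem tv_hellinger_min_transitionMeasure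
    {d : ℕ} (π πt : Measure (Fin d → ℝ)) [IsProbabilityMeasure π] [IsProbabilityMeasure πt]
    (P : Kernel (Fin d → ℝ) (Fin d → ℝ)) [IsMarkovKernel P]
    (hac : ((π ⊗ₘ P).map Prod.swap) ≪ (π ⊗ₘ P))
    (hact : ((πt ⊗ₘ P).map Prod.swap) ≪ (πt ⊗ₘ P)) :
    tvDist ((π ⊗ₘ P) ⊓ ((π ⊗ₘ P).map Prod.swap)) ((πt ⊗ₘ P) ⊓ ((πt ⊗ₘ P).map Prod.swap))
        ≤ 2 * tvDist π πt ∧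
      hellingerDist ((π ⊗ₘ P) ⊓ ((π ⊗ₘ P).map Prod.swap))
          ((πt ⊗ₘ P) ⊓ ((πt ⊗ₘ P).map Prod.swap))
        ≤ 2 * hellingerDist π πt := by
  constructor
  · have key := aux_key π πt P (fun a b => |a - b|)
      (fun w a b hw => by show |w * a - w * b| = w * |a - b|; rw [← mul_sub, abs_mul, abs_of_nonneg hw])
      (by continuity)
      (fun a b => abs_nonneg _)
      (fun a b ha hb => by show |a - b| ≤ 2 * (a + b); rw [abs_le]; constructor <;> linarith)
      (fun a b c d => aux_abs_min_sub_min a b c d)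
    unfold tvDist
    nlinarith [key]
  · have key := aux_key π πt P (fun a b => (Real.sqrt a - Real.sqrt b) ^ 2)
      (fun w a b hw => by
        show (Real.sqrt (w * a) - Real.sqrt (w * b)) ^ 2 = w * (Real.sqrt a - Real.sqrt b) ^ 2
        rw [Real.sqrt_mul hw, Real.sqrt_mul hw, ← mul_sub, mul_pow, Real.sq_sqrt hw])
      (by continuity)
      (fun a b => sq_nonneg _)
      (fun a b ha hb => by
        show (Real.sqrt a - Real.sqrt b) ^ 2 ≤ 2 * (a + b)
        nlinarith [Real.sq_sqrt ha, Real.sq_sqrt hb, Real.sqrt_nonneg a, Real.sqrt_nonneg b,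
          sq_nonneg (Real.sqrt a - Real.sqrt b), mul_nonneg (Real.sqrt_nonneg a) (Real.sqrt_nonneg b)])
      (fun a b c d => aux_sq_sqrt_min_sub a b c d)
    unfold hellingerDist
    have h2 : Real.sqrt 2 ≤ 2 := by
      nlinarith [Real.sq_sqrt (by norm_num : (0:ℝ) ≤ 2), Real.sqrt_nonneg 2]
    have hIπ : 0 ≤ ∫ x, (Real.sqrt (π.rnDeriv (π + πt) x).toReal
        - Real.sqrt (πt.rnDeriv (π + πt) x).toReal) ^ 2 ∂(π + πt) :=
      integral_nonneg fun x => sq_nonneg _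
    calc Real.sqrt (∫ p, (Real.sqrt _ - Real.sqrt _) ^ 2 ∂_)
        ≤ Real.sqrt (2 * ∫ x, (Real.sqrt (π.rnDeriv (π + πt) x).toReal
            - Real.sqrt (πt.rnDeriv (π + πt) x).toReal) ^ 2 ∂(π + πt)) := Real.sqrt_le_sqrt key
      _ = Real.sqrt 2 * Real.sqrt (∫ x, (Real.sqrt (π.rnDeriv (π + πt) x).toReal
            - Real.sqrt (πt.rnDeriv (π + πt) x).toReal) ^ 2 ∂(π + πt)) := by
          rw [Real.sqrt_mul (by norm_num)]
      _ ≤ 2 * Real.sqrt (∫ x, (Real.sqrt (π.rnDeriv (π + πt) x).toReal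
            - Real.sqrt (πt.rnDeriv (π + πt) x).toReal) ^ 2 ∂(π + πt)) :=
          mul_le_mul_of_nonneg_right h2 (Real.sqrt_nonneg _)
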